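/- Let m ≥ 0, n ≥ 0, and let (0, α_2, α_3, …) be a binary partition of n with α_1 = 0 satisfying 2^{m+2-i} ∣ α_i for all 2 ≤ i ≤ m+1. Let k be the number of indices i with 2 ≤ i ≤ m+1 such that α_i ≡ 2^{m+2-i} (mod 2^{m+3-i}). If n ≡ 2^{m+1} (mod 2^{m+2}) and k is even, or if n ≡ 0 (mod 2^{m+2}) and k is odd, then α_{m+2} is odd. -/

import Mathlib

/-- The integer partitioned by the binary partition `α`, where `α i` is the
number of parts equal to `2 ^ i` (so `α i` is the `α_{i+1}` of the paper). -/
def binWeight (α : ℕ →₀ ℕ) : ℕ := α.sum fun i a => a * 2 ^ i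

/-- With indices shifted down by one (paper's `α_i` is `α (i-1)` here): if
`(0, α₂, α₃, …)` is a binary partition of `n` with `α₁ = 0` and
`2^(m+2-i) ∣ α_i` for `2 ≤ i ≤ m+1`, and `k` is the number of indices
`2 ≤ i ≤ m+1` with `α_i ≡ 2^(m+2-i) (mod 2^(m+3-i))`, then whenever
`n ≡ 2^(m+1) (mod 2^(m+2))` with `k` even, or `n ≡ 0 (mod 2^(m+2))` with `k`
odd, the entry `α_{m+2}` is odd. -/
theorem stmt11 (m n : ℕ) (α : ℕ →₀ ℕ)
    (hsum : binWeight α = n) (h0 : α 0 = 0)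
    (hdvd : ∀ i, 1 ≤ i → i ≤ m → 2 ^ (m + 1 - i) ∣ α i)
    (k : ℕ)
    (hk : k = ((Finset.Icc 1 m).filter
      (fun i => α i ≡ 2 ^ (m + 1 - i) [MOD 2 ^ (m + 2 - i)])).card)
    (h : (n % 2 ^ (m + 2) = 2 ^ (m + 1) ∧ Even k) ∨
         (n % 2 ^ (m + 2) = 0 ∧ Odd k)) :
    Odd (α (m + 1)) := by
  classical
  set P := 2 ^ (m + 2) with hP
  have key : binWeight α ≡ ∑ i ∈ Finset.range (m + 2), α i * 2 ^ i [MOD P] := by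
    rw [binWeight, Finsupp.sum]
    rw [← Finset.sum_filter_add_sum_filter_not α.support (· < m + 2)]
    have h1 : ∑ i ∈ α.support.filter (· < m + 2), α i * 2 ^ i
        = ∑ i ∈ Finset.range (m + 2), α i * 2 ^ i := by
      apply Finset.sum_subset
      · intro x hx
        simp only [Finset.mem_filter, Finset.mem_range] at hx ⊢
        exact hx.2
      · intro x hx hnx
        simp only [Finset.mem_filter, Finset.mem_range, Finsupp.mem_support_iff] at hx hnx
        have : α x = 0 := by
          by_contra hc
          exact hnx ⟨hc, hx⟩
        simp [this]
    rw [h1]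
    have h2 : P ∣ ∑ i ∈ α.support.filter (fun i => ¬ i < m + 2), α i * 2 ^ i := by
      apply Finset.dvd_sum
      intro i hi
      simp only [Finset.mem_filter, not_lt] at hi
      exact Dvd.dvd.mul_left (pow_dvd_pow 2 hi.2) _
    calc (∑ i ∈ Finset.range (m + 2), α i * 2 ^ i) +
          ∑ i ∈ α.support.filter (fun i => ¬ i < m + 2), α i * 2 ^ i
        ≡ (∑ i ∈ Finset.range (m + 2), α i * 2 ^ i) + 0 [MOD P] :=
          Nat.ModEq.add_left _ ((Nat.modEq_zero_iff_dvd).mpr h2)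
      _ = ∑ i ∈ Finset.range (m + 2), α i * 2 ^ i := by ring
  set b : ℕ → ℕ := fun i => α i / 2 ^ (m + 1 - i) with hb
  have hab : ∀ i ∈ Finset.Icc 1 m, α i = b i * 2 ^ (m + 1 - i) := by
    intro i hi
    simp only [Finset.mem_Icc] at hi
    exact (Nat.div_mul_cancel (hdvd i hi.1 hi.2)).symm
  have hsplit : ∑ i ∈ Finset.range (m + 2), α i * 2 ^ i
      = ((∑ i ∈ Finset.Icc 1 m, b i) + α (m + 1)) * 2 ^ (m + 1) := by
    have hr : Finset.range (m + 2) = insert 0 (insert (m + 1) (Finset.Icc 1 m)) := by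
      ext x
      simp only [Finset.mem_range, Finset.mem_insert, Finset.mem_Icc]
      omega
    rw [hr, Finset.sum_insert (by simp), Finset.sum_insert (by simp)]
    rw [h0]
    have : ∑ i ∈ Finset.Icc 1 m, α i * 2 ^ i
        = (∑ i ∈ Finset.Icc 1 m, b i) * 2 ^ (m + 1) := by
      rw [Finset.sum_mul]
      apply Finset.sum_congr rfl
      intro i hi
      simp only [Finset.mem_Icc] at hi
      rw [hab i (by simp [Finset.mem_Icc]; omega), mul_assoc, ← pow_add]
      congr 2
      omega
    rw [this]
    ring
  have hbk : (∑ i ∈ Finset.Icc 1 m, b i) % 2 = k % 2 := by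
    have hmod : ∀ i ∈ Finset.Icc 1 m, b i % 2 =
        if α i ≡ 2 ^ (m + 1 - i) [MOD 2 ^ (m + 2 - i)] then 1 else 0 := by
      intro i hi
      simp only [Finset.mem_Icc] at hi
      have ht : (2:ℕ) ^ (m + 2 - i) = 2 * 2 ^ (m + 1 - i) := by
        rw [← pow_succ']
        congr 1
        omega
      have hpos : (0:ℕ) < 2 ^ (m + 1 - i) := Nat.pow_pos (by norm_num)
      have hcond : (α i ≡ 2 ^ (m + 1 - i) [MOD 2 ^ (m + 2 - i)]) ↔ b i % 2 = 1 := by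
        rw [Nat.ModEq, hab i (by simp [Finset.mem_Icc]; omega), ht,
          Nat.mul_mod_mul_right]
        have h2t : (2:ℕ) ^ (m + 1 - i) % (2 * 2 ^ (m + 1 - i)) = 2 ^ (m + 1 - i) :=
          Nat.mod_eq_of_lt (by omega)
        rw [h2t]
        constructor
        · intro he
          exact Nat.eq_of_mul_eq_mul_right hpos (by rw [he, one_mul])
        · intro he
          rw [he, one_mul]
      by_cases hc : α i ≡ 2 ^ (m + 1 - i) [MOD 2 ^ (m + 2 - i)]
      · simp [hc, hcond.mp hc]
      · have hne : b i % 2 ≠ 1 := fun h => hc (hcond.mpr h)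
        have : b i % 2 < 2 := Nat.mod_lt _ (by norm_num)
        simp only [hc, if_false]
        omega
    rw [Finset.sum_nat_mod, Finset.sum_congr rfl hmod, ← Finset.sum_filter,
      Finset.sum_const, smul_eq_mul, mul_one, hk]
  -- combine
  have hn : n % P = ((∑ i ∈ Finset.Icc 1 m, b i) + α (m + 1)) % 2 * 2 ^ (m + 1) := by
    have h1 : n ≡ ((∑ i ∈ Finset.Icc 1 m, b i) + α (m + 1)) * 2 ^ (m + 1) [MOD P] := by
      rw [← hsum, ← hsplit]
      exact key
    rw [Nat.ModEq] at h1
    rw [h1, hP, show (2:ℕ) ^ (m + 2) = 2 * 2 ^ (m + 1) from by ring, Nat.mul_mod_mul_right]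
  rcases Nat.even_or_odd (α (m + 1)) with he | ho
  · exfalso
    have ha2 : α (m + 1) % 2 = 0 := Nat.even_iff.mp he
    have : ((∑ i ∈ Finset.Icc 1 m, b i) + α (m + 1)) % 2 = k % 2 := by
      omega
    rw [this] at hn
    have hpos : (0:ℕ) < 2 ^ (m + 1) := Nat.pow_pos (by norm_num)
    rcases h with ⟨hn1, hk1⟩ | ⟨hn1, hk1⟩
    · rw [Nat.even_iff.mp hk1] at hn
      omega
    · rw [Nat.odd_iff.mp hk1] at hn
      omega
  · exact ho
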